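/- Let (k_n) satisfy k_n/(ln n)⁴ → ∞ and define G_k(t) as the minimum over ε ∈ [0,t] of (2e³/9)F_d(t−ε) + (d²+d)H_k(ε) + 2d·R_k(ε) (with H, R as in the paper). Then for every λ > 2, n·G_{k_n}(λ·ln n) → 0 as n → ∞. -/

import Mathlib

open MeasureTheory Filter
open scoped Topology

noncomputable section

/-- The upper tail `F_d(x) = P(χ²(d) > x)` of the chi-square distribution with `d` degrees
of freedom. -/
def chiSqTail (d : ℕ) (x : ℝ) : ℝ :=
  ∫ y in Set.Ioi x, y ^ ((d : ℝ) / 2 - 1) * Real.exp (-y / 2) /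
    (2 ^ ((d : ℝ) / 2) * Real.Gamma ((d : ℝ) / 2))

/-- The function `H_k(ε)` of the paper. -/
def Hfun (d k : ℕ) (ε : ℝ) : ℝ :=
  Real.exp (-((k : ℝ) * ε ^ ((2 : ℝ) / 3) * ((d : ℝ) + 2) ^ (-(4 : ℝ) / 3)) /
    ((d : ℝ) ^ 2 * ((k : ℝ) ^ ((1 : ℝ) / 3) + ((d : ℝ) + 2) ^ ((1 : ℝ) / 3) * ε ^ ((1 : ℝ) / 3)) ^ 2))

/-- The function `R_k(ε)` of the paper. -/
def Rfun (d k : ℕ) (ε : ℝ) : ℝ :=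
  Real.exp (-((k : ℝ) ^ ((1 : ℝ) / 3) * ε ^ ((2 : ℝ) / 3)) /
    ((d : ℝ) ^ 2 * ((d : ℝ) + 2) ^ ((4 : ℝ) / 3)))

/-- The function `G_k(t)` of the paper: minimum over `ε ∈ [0,t]` of
`(2e³/9)F_d(t−ε) + (d²+d)H_k(ε) + 2d R_k(ε)`. -/
def Gfun (d k : ℕ) (t : ℝ) : ℝ :=
  sInf ((fun ε => (2 * Real.exp 3 / 9) * chiSqTail d (t - ε) +
    ((d : ℝ) ^ 2 + d) * Hfun d k ε + 2 * d * Rfun d k ε) '' Set.Icc 0 t)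

/-! ### Auxiliary lemmas -/

lemma integral_exp_neg_mul_Ioi {b : ℝ} (hb : 0 < b) (x : ℝ) :
    ∫ y in Set.Ioi x, Real.exp (-(b * y)) = b⁻¹ * Real.exp (-(b * x)) := by
  have h := MeasureTheory.integral_comp_mul_left_Ioi (fun z => Real.exp (-z)) x hb
  simp only [smul_eq_mul] at h
  rw [h, integral_exp_neg_Ioi]

lemma chiSqTail_nonneg (d : ℕ) (hd : 1 ≤ d) {x : ℝ} (hx : 0 ≤ x) : 0 ≤ chiSqTail d x := by
  have hΓ : 0 < Real.Gamma ((d : ℝ) / 2) := by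
    apply Real.Gamma_pos_of_pos
    have : (1 : ℝ) ≤ (d : ℝ) := by exact_mod_cast hd
    linarith
  refine setIntegral_nonneg measurableSet_Ioi fun y hy => ?_
  have hy0 : 0 < y := lt_of_le_of_lt hx hy
  have h2 : (0 : ℝ) < 2 ^ ((d : ℝ) / 2) := Real.rpow_pos_of_pos (by norm_num) _
  positivity

/-- pointwise exponential bound on the chi-square tail. -/
lemma chiSqTail_le (d : ℕ) (hd : 1 ≤ d) {a : ℝ} (ha : 0 < a) (ha2 : a < 1 / 2) :
    ∃ C : ℝ, 0 ≤ C ∧ ∀ x : ℝ, 1 ≤ x → chiSqTail d x ≤ C * Real.exp (-(a * x)) := by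
  have hd1 : (1 : ℝ) ≤ (d : ℝ) := by exact_mod_cast hd
  have hΓ : 0 < Real.Gamma ((d : ℝ) / 2) := Real.Gamma_pos_of_pos (by linarith)
  have h2 : (0 : ℝ) < 2 ^ ((d : ℝ) / 2) := Real.rpow_pos_of_pos (by norm_num) _
  set δ : ℝ := 1 / 2 - a with hδdef
  have hδ : 0 < δ := by simp only [hδdef]; linarith
  set K : ℝ := ((d.factorial : ℝ) / δ ^ d) / (2 ^ ((d : ℝ) / 2) * Real.Gamma ((d : ℝ) / 2))
    with hKdef
  have hK : 0 ≤ K := by positivity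
  refine ⟨K / a, by positivity, fun x hx => ?_⟩
  have key : ∀ y : ℝ, y ∈ Set.Ioi x →
      y ^ ((d : ℝ) / 2 - 1) * Real.exp (-y / 2) / (2 ^ ((d : ℝ) / 2) *
        Real.Gamma ((d : ℝ) / 2)) ≤ K * Real.exp (-(a * y)) := by
    intro y hy
    have hy1 : (1 : ℝ) ≤ y := le_of_lt (lt_of_le_of_lt hx hy)
    have hy0 : 0 < y := lt_of_lt_of_le one_pos hy1
    have h1 : y ^ ((d : ℝ) / 2 - 1) ≤ y ^ (d : ℝ) :=
      Real.rpow_le_rpow_of_exponent_le hy1 (by linarith)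
    have h2' : y ^ (d : ℝ) = y ^ d := Real.rpow_natCast y d
    have h3 : (δ * y) ^ d / (d.factorial : ℝ) ≤ Real.exp (δ * y) :=
      Real.pow_div_factorial_le_exp (δ * y) (by positivity) d
    have h4 : y ^ d ≤ (d.factorial : ℝ) / δ ^ d * Real.exp (δ * y) := by
      have hfac : (0 : ℝ) < (d.factorial : ℝ) := by positivity
      rw [mul_pow] at h3
      rw [div_le_iff₀ hfac] at h3
      calc y ^ d = δ ^ d * y ^ d / δ ^ d := by field_simp
        _ ≤ Real.exp (δ * y) * (d.factorial : ℝ) / δ ^ d := by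
            apply div_le_div_of_nonneg_right ?_ (by positivity)
            · exact h3
        _ = (d.factorial : ℝ) / δ ^ d * Real.exp (δ * y) := by ring
    have h5 : y ^ ((d : ℝ) / 2 - 1) * Real.exp (-y / 2) ≤
        (d.factorial : ℝ) / δ ^ d * Real.exp (-(a * y)) := by
      calc y ^ ((d : ℝ) / 2 - 1) * Real.exp (-y / 2)
          ≤ ((d.factorial : ℝ) / δ ^ d * Real.exp (δ * y)) * Real.exp (-y / 2) := by
            apply mul_le_mul_of_nonneg_right _ (Real.exp_pos _).le
            calc y ^ ((d : ℝ) / 2 - 1) ≤ y ^ (d : ℝ) := h1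
              _ = y ^ d := h2'
              _ ≤ _ := h4
        _ = (d.factorial : ℝ) / δ ^ d * Real.exp (δ * y + -y / 2) := by
            rw [Real.exp_add]; ring
        _ = (d.factorial : ℝ) / δ ^ d * Real.exp (-(a * y)) := by
            congr 1
            congr 1
            simp only [hδdef]; ring
    calc y ^ ((d : ℝ) / 2 - 1) * Real.exp (-y / 2) / (2 ^ ((d : ℝ) / 2) *
          Real.Gamma ((d : ℝ) / 2))
        ≤ (d.factorial : ℝ) / δ ^ d * Real.exp (-(a * y)) / (2 ^ ((d : ℝ) / 2) *
          Real.Gamma ((d : ℝ) / 2)) := by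
          apply div_le_div_of_nonneg_right h5 (by positivity)
      _ = K * Real.exp (-(a * y)) := by rw [hKdef]; ring
  have hint : IntegrableOn (fun y : ℝ => K * Real.exp (-(a * y))) (Set.Ioi x) := by
    have h := (exp_neg_integrableOn_Ioi x ha).const_mul K
    simp only [neg_mul] at h
    exact h
  have hnn : ∀ y : ℝ, y ∈ Set.Ioi x →
      0 ≤ y ^ ((d : ℝ) / 2 - 1) * Real.exp (-y / 2) / (2 ^ ((d : ℝ) / 2) *
        Real.Gamma ((d : ℝ) / 2)) := by
    intro y hy
    have hy0 : 0 < y := lt_of_lt_of_le (lt_of_lt_of_le one_pos hx) hy.le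
    positivity
  calc chiSqTail d x
      ≤ ∫ y in Set.Ioi x, K * Real.exp (-(a * y)) := by
        unfold chiSqTail
        apply integral_mono_of_nonneg
        · exact (ae_restrict_iff' measurableSet_Ioi).2 (Filter.Eventually.of_forall hnn)
        · exact hint
        · exact (ae_restrict_iff' measurableSet_Ioi).2 (Filter.Eventually.of_forall key)
    _ = K * (a⁻¹ * Real.exp (-(a * x))) := by
        rw [integral_const_mul, integral_exp_neg_mul_Ioi ha]
    _ = K / a * Real.exp (-(a * x)) := by ring

/-- First limit: `n · exp(−a(λ ln n − 1)) → 0` once `aλ > 1`. -/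
lemma lim_exp1 {a lam : ℝ} (ha : 0 < a) (h : 1 < a * lam) :
    Tendsto (fun n : ℕ => (n : ℝ) * Real.exp (-(a * (lam * Real.log n - 1)))) atTop (𝓝 0) := by
  have hlog : Tendsto (fun n : ℕ => Real.log n) atTop atTop :=
    Real.tendsto_log_atTop.comp tendsto_natCast_atTop_atTop
  have h1 : Tendsto (fun n : ℕ => (1 - a * lam) * Real.log n) atTop atBot :=
    (tendsto_const_mul_atBot_of_neg (by linarith)).2 hlog
  have h2 : Tendsto (fun n : ℕ => Real.exp ((1 - a * lam) * Real.log n)) atTop (𝓝 0) :=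
    Real.tendsto_exp_atBot.comp h1
  have h3 : Tendsto (fun n : ℕ =>
      Real.exp a * Real.exp ((1 - a * lam) * Real.log n)) atTop (𝓝 0) := by
    simpa using h2.const_mul (Real.exp a)
  apply h3.congr'
  filter_upwards [eventually_ge_atTop 1] with n hn
  have hn0 : (0 : ℝ) < (n : ℝ) := by exact_mod_cast hn
  nth_rewrite 2 [← Real.exp_log hn0]
  rw [← Real.exp_add, ← Real.exp_add]
  congr 1
  ring

/-- Second limit: `n · exp(−c k_n^{1/3}) → 0` when `k_n/(ln n)⁴ → ∞`. -/
lemma lim_exp2 {c : ℝ} (hc : 0 < c) (k : ℕ → ℕ)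
    (hk : Tendsto (fun n : ℕ => (k n : ℝ) / (Real.log n) ^ 4) atTop atTop) :
    Tendsto (fun n : ℕ => (n : ℝ) * Real.exp (-(c * (k n : ℝ) ^ ((1 : ℝ) / 3))))
      atTop (𝓝 0) := by
  have hlog : Tendsto (fun n : ℕ => Real.log n) atTop atTop :=
    Real.tendsto_log_atTop.comp tendsto_natCast_atTop_atTop
  have hinv : Tendsto (fun n : ℕ => ((n : ℝ))⁻¹) atTop (𝓝 0) :=
    tendsto_inv_atTop_zero.comp tendsto_natCast_atTop_atTop
  apply squeeze_zero' (Filter.Eventually.of_forall fun n => by positivity) _ hinv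
  filter_upwards [hlog.eventually_ge_atTop (max 1 ((2 / c) ^ 3)),
    hk.eventually_ge_atTop 1] with n hl hkn
  set l : ℝ := Real.log n with hldef
  have hl1 : (1 : ℝ) ≤ l := le_trans (le_max_left _ _) hl
  have hl0 : 0 < l := lt_of_lt_of_le one_pos hl1
  have hlc : (2 / c) ^ 3 ≤ l := le_trans (le_max_right _ _) hl
  have hc2 : 0 < 2 / c := by positivity
  -- l^{1/3} ≥ 2/c
  have hcube : 2 / c ≤ l ^ ((1 : ℝ) / 3) := by
    have : ((2 / c) ^ 3 : ℝ) ^ ((1 : ℝ) / 3) ≤ l ^ ((1 : ℝ) / 3) :=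
      Real.rpow_le_rpow (by positivity) hlc (by norm_num)
    calc 2 / c = (((2 / c) ^ 3 : ℝ)) ^ ((1 : ℝ) / 3) := by
          rw [← Real.rpow_natCast (2 / c) 3, ← Real.rpow_mul hc2.le]
          norm_num
      _ ≤ l ^ ((1 : ℝ) / 3) := this
  -- k n ≥ l^4
  have hkl : l ^ 4 ≤ (k n : ℝ) := by
    have h4 : (0 : ℝ) < l ^ 4 := by positivity
    have := (one_le_div h4).1 hkn
    linarith
  -- (k n)^{1/3} ≥ l^{4/3} = l * l^{1/3}
  have hk13 : l * l ^ ((1 : ℝ) / 3) ≤ (k n : ℝ) ^ ((1 : ℝ) / 3) := by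
    have h1 : (l ^ 4 : ℝ) ^ ((1 : ℝ) / 3) ≤ (k n : ℝ) ^ ((1 : ℝ) / 3) :=
      Real.rpow_le_rpow (by positivity) hkl (by norm_num)
    calc l * l ^ ((1 : ℝ) / 3) = l ^ ((4 : ℝ) / 3) := by
          rw [show (4 : ℝ) / 3 = 1 + 1 / 3 by norm_num, Real.rpow_add hl0, Real.rpow_one]
      _ = (l ^ 4 : ℝ) ^ ((1 : ℝ) / 3) := by
          rw [← Real.rpow_natCast l 4, ← Real.rpow_mul hl0.le]
          norm_num
      _ ≤ _ := h1
  -- c * (k n)^{1/3} ≥ 2 l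
  have hmain : 2 * l ≤ c * (k n : ℝ) ^ ((1 : ℝ) / 3) := by
    have h1 : l * (2 / c) ≤ l * l ^ ((1 : ℝ) / 3) :=
      mul_le_mul_of_nonneg_left hcube hl0.le
    have h2 : c * (l * (2 / c)) ≤ c * (k n : ℝ) ^ ((1 : ℝ) / 3) :=
      mul_le_mul_of_nonneg_left (le_trans h1 hk13) hc.le
    have h3 : c * (l * (2 / c)) = 2 * l := by field_simp
    linarith
  have hn0 : (0 : ℝ) < (n : ℝ) := by
    rcases Nat.eq_zero_or_pos n with h | h
    · exfalso
      have h1 := hl1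
      rw [hldef, h] at h1
      simp at h1
      linarith
    · exact_mod_cast h
  calc (n : ℝ) * Real.exp (-(c * (k n : ℝ) ^ ((1 : ℝ) / 3)))
      ≤ (n : ℝ) * Real.exp (-(2 * l)) := by
        apply mul_le_mul_of_nonneg_left _ hn0.le
        exact Real.exp_le_exp.2 (by linarith)
    _ = Real.exp l * Real.exp (-(2 * l)) := by
        rw [← Real.exp_log hn0, ← hldef]
    _ = Real.exp (-l) := by
        rw [← Real.exp_add]
        ring_nf
    _ = ((n : ℝ))⁻¹ := by
        rw [Real.exp_neg, hldef, Real.exp_log hn0]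

/-- constant in the bound for `H`. -/
def cH (d : ℕ) : ℝ := ((d : ℝ) + 2) ^ (-(4 : ℝ) / 3) / (4 * (d : ℝ) ^ 2)

/-- constant in the bound for `R`. -/
def cR (d : ℕ) : ℝ := (((d : ℝ) ^ 2) * ((d : ℝ) + 2) ^ ((4 : ℝ) / 3))⁻¹

lemma cH_pos (d : ℕ) (hd : 1 ≤ d) : 0 < cH d := by
  have hd1 : (1 : ℝ) ≤ (d : ℝ) := by exact_mod_cast hd
  have h1 : (0 : ℝ) < ((d : ℝ) + 2) ^ (-(4 : ℝ) / 3) :=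
    Real.rpow_pos_of_pos (by linarith) _
  unfold cH
  positivity

lemma cR_pos (d : ℕ) (hd : 1 ≤ d) : 0 < cR d := by
  have hd1 : (1 : ℝ) ≤ (d : ℝ) := by exact_mod_cast hd
  have h1 : (0 : ℝ) < ((d : ℝ) + 2) ^ ((4 : ℝ) / 3) :=
    Real.rpow_pos_of_pos (by linarith) _
  unfold cR
  positivity

lemma Rfun_one (d k : ℕ) : Rfun d k 1 = Real.exp (-(cR d * (k : ℝ) ^ ((1 : ℝ) / 3))) := by
  unfold Rfun cR
  congr 1
  rw [Real.one_rpow]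
  field_simp

lemma Hfun_one_le (d : ℕ) (hd : 1 ≤ d) {k : ℕ} (hk : (d : ℝ) + 2 ≤ (k : ℝ)) :
    Hfun d k 1 ≤ Real.exp (-(cH d * (k : ℝ) ^ ((1 : ℝ) / 3))) := by
  have hd1 : (1 : ℝ) ≤ (d : ℝ) := by exact_mod_cast hd
  have hd2 : (0 : ℝ) < (d : ℝ) + 2 := by linarith
  have hk0 : (0 : ℝ) < (k : ℝ) := lt_of_lt_of_le hd2 hk
  set κ : ℝ := (k : ℝ) ^ ((1 : ℝ) / 3) with hκdef
  have hκ0 : 0 < κ := Real.rpow_pos_of_pos hk0 _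
  have hκ3 : κ ^ 3 = (k : ℝ) := by
    rw [hκdef, ← Real.rpow_natCast ((k : ℝ) ^ ((1 : ℝ) / 3)) 3, ← Real.rpow_mul hk0.le]
    norm_num
  have hA : (0 : ℝ) < ((d : ℝ) + 2) ^ (-(4 : ℝ) / 3) := Real.rpow_pos_of_pos hd2 _
  have hB : ((d : ℝ) + 2) ^ ((1 : ℝ) / 3) ≤ κ :=
    Real.rpow_le_rpow hd2.le hk (by norm_num)
  have hBpos : (0 : ℝ) < ((d : ℝ) + 2) ^ ((1 : ℝ) / 3) := Real.rpow_pos_of_pos hd2 _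
  unfold Hfun
  rw [Real.exp_le_exp]
  rw [Real.one_rpow, Real.one_rpow, mul_one, mul_one]
  rw [neg_div, neg_le_neg_iff]
  -- goal: cH d * κ ≤ k * A / (d² (κ + B)²)
  have hden1 : (0 : ℝ) < (d : ℝ) ^ 2 * (κ + ((d : ℝ) + 2) ^ ((1 : ℝ) / 3)) ^ 2 := by
    positivity
  have hden2 : (d : ℝ) ^ 2 * (κ + ((d : ℝ) + 2) ^ ((1 : ℝ) / 3)) ^ 2 ≤
      (d : ℝ) ^ 2 * (2 * κ) ^ 2 := by
    apply mul_le_mul_of_nonneg_left _ (by positivity)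
    apply pow_le_pow_left₀ (by positivity) (by linarith)
  calc cH d * κ = (k : ℝ) * ((d : ℝ) + 2) ^ (-(4 : ℝ) / 3) / ((d : ℝ) ^ 2 * (2 * κ) ^ 2) := by
        unfold cH
        rw [← hκ3]
        field_simp
        ring
    _ ≤ (k : ℝ) * ((d : ℝ) + 2) ^ (-(4 : ℝ) / 3) /
        ((d : ℝ) ^ 2 * (κ + ((d : ℝ) + 2) ^ ((1 : ℝ) / 3)) ^ 2) := by
        apply div_le_div_of_nonneg_left (by positivity) hden1 hden2

lemma Gfun_nonneg (d k : ℕ) (hd : 1 ≤ d) {t : ℝ} (ht : 0 ≤ t) : 0 ≤ Gfun d k t := by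
  apply Real.sInf_nonneg
  rintro v ⟨ε, ⟨hε0, hεt⟩, rfl⟩
  have h1 : 0 ≤ chiSqTail d (t - ε) := chiSqTail_nonneg d hd (by linarith)
  have h2 : 0 < Hfun d k ε := Real.exp_pos _
  have h3 : 0 < Rfun d k ε := Real.exp_pos _
  have h4 : (0 : ℝ) < Real.exp 3 := Real.exp_pos _
  positivity

lemma Gfun_le_one (d k : ℕ) (hd : 1 ≤ d) {t : ℝ} (ht : 1 ≤ t) :
    Gfun d k t ≤ (2 * Real.exp 3 / 9) * chiSqTail d (t - 1) +
      ((d : ℝ) ^ 2 + d) * Hfun d k 1 + 2 * d * Rfun d k 1 := by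
  apply csInf_le
  · refine ⟨0, ?_⟩
    rintro v ⟨ε, ⟨hε0, hεt⟩, rfl⟩
    have h1 : 0 ≤ chiSqTail d (t - ε) := chiSqTail_nonneg d hd (by linarith)
    have h2 : 0 < Hfun d k ε := Real.exp_pos _
    have h3 : 0 < Rfun d k ε := Real.exp_pos _
    have h4 : (0 : ℝ) < Real.exp 3 := Real.exp_pos _
    positivity
  · exact ⟨1, ⟨zero_le_one, ht⟩, rfl⟩

/-- If `k_n/(ln n)⁴ → ∞`, then for every `λ > 2`, `n·G_{k_n}(λ ln n) → 0`. -/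
theorem tendsto_n_mul_G (d : ℕ) (hd : 1 ≤ d) (k : ℕ → ℕ)
    (hk : Tendsto (fun n => (k n : ℝ) / (Real.log n) ^ 4) atTop atTop)
    (lam : ℝ) (hlam : 2 < lam) :
    Tendsto (fun (n : ℕ) => (n : ℝ) * Gfun d (k n) (lam * Real.log n)) atTop (𝓝 0) := by
  have hd1 : (1 : ℝ) ≤ (d : ℝ) := by exact_mod_cast hd
  have hlam0 : 0 < lam := by linarith
  set a : ℝ := 1 / 4 + 1 / (2 * lam) with hadef
  have ha : 0 < a := by positivity
  have ha2 : a < 1 / 2 := by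
    have : 1 / (2 * lam) < 1 / 4 := by
      apply div_lt_div_of_pos_left one_pos (by norm_num)
      linarith
    simp only [hadef]; linarith
  have halam : 1 < a * lam := by
    have : a * lam = lam / 4 + 1 / 2 := by
      rw [hadef]
      field_simp
    rw [this]; linarith
  obtain ⟨C, hC0, hC⟩ := chiSqTail_le d hd ha ha2
  have hlog : Tendsto (fun n : ℕ => Real.log n) atTop atTop :=
    Real.tendsto_log_atTop.comp tendsto_natCast_atTop_atTop
  -- the dominating sequence
  set g : ℕ → ℝ := fun n =>
    (2 * Real.exp 3 / 9) * C * ((n : ℝ) * Real.exp (-(a * (lam * Real.log n - 1)))) +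
    ((d : ℝ) ^ 2 + d) * ((n : ℝ) * Real.exp (-(cH d * (k n : ℝ) ^ ((1 : ℝ) / 3)))) +
    2 * d * ((n : ℝ) * Real.exp (-(cR d * (k n : ℝ) ^ ((1 : ℝ) / 3)))) with hgdef
  have hg : Tendsto g atTop (𝓝 0) := by
    rw [hgdef]
    have l1 := (lim_exp1 ha halam).const_mul (2 * Real.exp 3 / 9 * C)
    have l2 := (lim_exp2 (cH_pos d hd) k hk).const_mul ((d : ℝ) ^ 2 + d)
    have l3 := (lim_exp2 (cR_pos d hd) k hk).const_mul (2 * (d : ℝ))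
    simp only [mul_zero] at l1 l2 l3
    have := (l1.add l2).add l3
    simpa [mul_assoc] using this
  apply squeeze_zero' _ _ hg
  · filter_upwards with n
    have hln : 0 ≤ Real.log n := Real.log_natCast_nonneg n
    have := Gfun_nonneg d (k n) hd (t := lam * Real.log n) (by positivity)
    positivity
  · filter_upwards [(hlog.const_mul_atTop hlam0).eventually_ge_atTop 2,
      hk.eventually_ge_atTop 1,
      (hlog.eventually_ge_atTop ((d : ℝ) + 2))] with n ht2 hkn hld2
    set t : ℝ := lam * Real.log n with htdef
    have ht1 : (1 : ℝ) ≤ t := by linarith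
    have hkd : (d : ℝ) + 2 ≤ (k n : ℝ) := by
      have hl1 : (1 : ℝ) ≤ Real.log n := by
        have : (1 : ℝ) ≤ (d : ℝ) + 2 := by linarith
        linarith
      have h4 : (0 : ℝ) < (Real.log n) ^ 4 := by positivity
      have hk4 : (Real.log n) ^ 4 ≤ (k n : ℝ) := by
        have := (one_le_div h4).1 hkn
        linarith
      calc (d : ℝ) + 2 ≤ Real.log n := hld2
        _ ≤ (Real.log n) ^ 4 := by
            calc Real.log n = Real.log n * 1 * 1 * 1 := by ring
              _ ≤ Real.log n * Real.log n * Real.log n * Real.log n := by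
                  apply mul_le_mul (mul_le_mul (mul_le_mul le_rfl hl1 zero_le_one
                    (by linarith)) hl1 zero_le_one (by positivity)) hl1 zero_le_one
                    (by positivity)
              _ = (Real.log n) ^ 4 := by ring
        _ ≤ (k n : ℝ) := hk4
    have hn0 : (0 : ℝ) ≤ (n : ℝ) := Nat.cast_nonneg n
    have hbound : Gfun d (k n) t ≤
        (2 * Real.exp 3 / 9) * (C * Real.exp (-(a * (t - 1)))) +
        ((d : ℝ) ^ 2 + d) * Real.exp (-(cH d * (k n : ℝ) ^ ((1 : ℝ) / 3))) +
        2 * d * Real.exp (-(cR d * (k n : ℝ) ^ ((1 : ℝ) / 3))) := by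
      refine le_trans (Gfun_le_one d (k n) hd ht1) ?_
      have b1 : chiSqTail d (t - 1) ≤ C * Real.exp (-(a * (t - 1))) := by
        apply hC
        linarith
      have b2 : Hfun d (k n) 1 ≤ Real.exp (-(cH d * (k n : ℝ) ^ ((1 : ℝ) / 3))) :=
        Hfun_one_le d hd hkd
      have b3 : Rfun d (k n) 1 = Real.exp (-(cR d * (k n : ℝ) ^ ((1 : ℝ) / 3))) :=
        Rfun_one d (k n)
      rw [b3]
      have he3 : (0 : ℝ) < Real.exp 3 := Real.exp_pos _
      gcongr
    calc (n : ℝ) * Gfun d (k n) t ≤ (n : ℝ) *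
          ((2 * Real.exp 3 / 9) * (C * Real.exp (-(a * (t - 1)))) +
          ((d : ℝ) ^ 2 + d) * Real.exp (-(cH d * (k n : ℝ) ^ ((1 : ℝ) / 3))) +
          2 * d * Real.exp (-(cR d * (k n : ℝ) ^ ((1 : ℝ) / 3)))) :=
        mul_le_mul_of_nonneg_left hbound hn0
      _ = g n := by rw [hgdef, htdef]; ring
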